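/- arXiv:1105.1151 — 2 statements merged into one kernel-verified Lean document; each statement's English description precedes it below -/
import Mathlib

section
/- Let p and q be coprime positive integers, Δ a 0-normalized Γ^{p,q}-semi-module, and D = D(Δ) the associated Young diagram in R_+^{p,q}. Then the number of pairs (a, b), where a is a p-generator of Δ, b is a q-cogenerator of Δ, and a < b, equals |{c ∈ R^{p,q} \ D : a(c)·q > (l(c)+1)·p}| + |{c ∈ D : (a(c)+1)·q < l(c)·p}|. -/
/-- The numerical semigroup `Γ^{p,q} = {ap + bq : a, b ∈ ℕ}`. -/
def Gamma (p q : ℕ) : Set ℕ := {n | ∃ a b : ℕ, n = a * p + b * q}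

/-- A `0`-normalized `Γ^{p,q}`-semi-module: `0 ∈ Δ` and `Δ + Γ^{p,q} ⊆ Δ`. -/
def IsSemiModule (p q : ℕ) (Δ : Set ℕ) : Prop :=
  0 ∈ Δ ∧ ∀ x ∈ Δ, ∀ g ∈ Gamma p q, x + g ∈ Δ

/-- Boxes of the `p × q` rectangle `R^{p,q}`: pairs `(x,y)` with `1 ≤ x ≤ p`, `1 ≤ y ≤ q`. -/
def Rbox (p q : ℕ) : Set (ℕ × ℕ) :=
  {c | 1 ≤ c.1 ∧ c.1 ≤ p ∧ 1 ≤ c.2 ∧ c.2 ≤ q}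

/-- Boxes of `R_+^{p,q}`: boxes with positive label, i.e. `qx + py < pq`. -/
def Rplus (p q : ℕ) : Set (ℕ × ℕ) :=
  {c | 1 ≤ c.1 ∧ 1 ≤ c.2 ∧ q * c.1 + p * c.2 < p * q}

/-- The label `f(x,y) = pq - qx - py` of a box. -/
def boxLabel (p q : ℕ) (c : ℕ × ℕ) : ℕ := p * q - (q * c.1 + p * c.2)

/-- The Young diagram `D(Δ)`: boxes of `R_+^{p,q}` whose label lies in `Δ`. -/
def diagD (p q : ℕ) (Δ : Set ℕ) : Set (ℕ × ℕ) :=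
  {c | c ∈ Rplus p q ∧ boxLabel p q c ∈ Δ}

/-- The arm of a box `c` of a Young diagram `D`: `a(c) = #{x' > x : (x',y) ∈ D}`. -/
noncomputable def arm (D : Set (ℕ × ℕ)) (c : ℕ × ℕ) : ℕ :=
  {x' : ℕ | c.1 < x' ∧ (x', c.2) ∈ D}.ncard

/-- The leg of a box `c` of a Young diagram `D`: `l(c) = #{y' > y : (x,y') ∈ D}`. -/
noncomputable def leg (D : Set (ℕ × ℕ)) (c : ℕ × ℕ) : ℕ :=
  {y' : ℕ | c.2 < y' ∧ (c.1, y') ∈ D}.ncard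

/-- The height of column `x` of `D`. -/
noncomputable def colHeight (D : Set (ℕ × ℕ)) (x : ℕ) : ℕ := {y : ℕ | (x, y) ∈ D}.ncard

/-- The length of row `y` of `D`. -/
noncomputable def rowLen (D : Set (ℕ × ℕ)) (y : ℕ) : ℕ := {x : ℕ | (x, y) ∈ D}.ncard

/-- The leg of a box `c = (x,y)` of `R^{p,q}` not in `D`:
`l(c) = y - 1 - (height of column x of D)`. -/
noncomputable def legOut (D : Set (ℕ × ℕ)) (c : ℕ × ℕ) : ℕ := c.2 - 1 - colHeight D c.1

/-- The arm of a box `c = (x,y)` of `R^{p,q}` not in `D`: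
`a(c) = x - 1 - (length of row y of D)`. -/
noncomputable def armOut (D : Set (ℕ × ℕ)) (c : ℕ × ℕ) : ℕ := c.1 - 1 - rowLen D c.2

/-- The `p`-basis of `Δ`: the set `Δ \ (Δ + p)` of `p`-generators of `Δ`. -/
def pBasis (p : ℕ) (Δ : Set ℕ) : Set ℕ := Δ \ ((· + p) '' Δ)

/-- `g(a) = |[a, a + q) \ Δ|`. -/
noncomputable def gInt (q : ℕ) (Δ : Set ℕ) (a : ℕ) : ℕ := (Set.Ico a (a + q) \ Δ).ncard

/-- The dimension of a semi-module: `dim Δ = Σ_{a ∈ p-basis} |[a, a + q) \ Δ|`. -/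
noncomputable def dimDelta (p q : ℕ) (Δ : Set ℕ) : ℕ :=
  ∑ᶠ a ∈ pBasis p Δ, gInt q Δ a

/-- `Δ ⊆ ℕ` viewed as a subset of `ℤ`. -/
def deltaZ (Δ : Set ℕ) : Set ℤ := {z | ∃ m ∈ Δ, (m : ℤ) = z}

/-- The `q`-cogenerators of `Δ`: integers `y` with `y ∉ Δ` and `y + q ∈ Δ`. -/
def qCogen (q : ℕ) (Δ : Set ℕ) : Set ℤ := {y | y ∉ deltaZ Δ ∧ y + (q : ℤ) ∈ deltaZ Δ}

namespace Stmt14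

variable (p q : ℕ) (Δ : Set ℕ)

/-- minimal element of `Δ` in the residue class `-qx mod p`. -/
noncomputable def mm (x : ℕ) : ℕ := sInf {n | n ∈ Δ ∧ p ∣ n + q * x}

/-- column height of column `x` of `D(Δ)`. -/
noncomputable def hh (x : ℕ) : ℕ := (p * q - (q * x + mm p q Δ x)) / p

variable {p q Δ}
variable (h0 : 0 ∈ Δ) (hcp : ∀ n ∈ Δ, n + p ∈ Δ) (hcq : ∀ n ∈ Δ, n + q ∈ Δ)

include h0 hcq in
lemma mul_q_mem (k : ℕ) : k * q ∈ Δ := by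
  induction k with
  | zero => simpa using h0
  | succ k ih => have := hcq _ ih; simpa [Nat.succ_mul] using this

include hcp in
lemma add_mul_p_mem {n : ℕ} (hn : n ∈ Δ) (k : ℕ) : n + p * k ∈ Δ := by
  induction k with
  | zero => simpa using hn
  | succ k ih => have := hcp _ ih; simpa [Nat.mul_succ, Nat.add_assoc] using this

include hcp in
lemma climb {a b : ℕ} (ha : a ∈ Δ) (hab : a ≤ b) (hd : p ∣ b - a) : b ∈ Δ := by
  obtain ⟨k, hk⟩ := hd
  have hb : b = a + p * k := by omega
  rw [hb]; exact add_mul_p_mem hcp ha k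

include h0 hcq in
lemma mm_spec {x : ℕ} (hx : x ≤ p) : mm p q Δ x ∈ Δ ∧ p ∣ mm p q Δ x + q * x := by
  have hne : {n | n ∈ Δ ∧ p ∣ n + q * x}.Nonempty := by
    refine ⟨(p - x) * q, mul_q_mem h0 hcq _, ?_⟩
    have h1 : (p - x) * q + q * x = p * q := by
      have h2 : (p - x) * q + x * q = p * q := by rw [← Nat.add_mul, Nat.sub_add_cancel hx]
      have h3 : q * x = x * q := Nat.mul_comm q x
      omega
    rw [h1]; exact Dvd.intro q rfl
  exact Nat.sInf_mem hne

include h0 hcq in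
lemma mm_le {x : ℕ} (hx : x ≤ p) : q * x + mm p q Δ x ≤ p * q := by
  have h1 : mm p q Δ x ≤ (p - x) * q := by
    apply Nat.sInf_le
    refine ⟨mul_q_mem h0 hcq _, ?_⟩
    have h1 : (p - x) * q + q * x = p * q := by
      have h2 : (p - x) * q + x * q = p * q := by rw [← Nat.add_mul, Nat.sub_add_cancel hx]
      have h3 : q * x = x * q := Nat.mul_comm q x
      omega
    rw [h1]; exact Dvd.intro q rfl
  have h2 : (p - x) * q + x * q = p * q := by rw [← Nat.add_mul, Nat.sub_add_cancel hx]
  have h3 : q * x = x * q := Nat.mul_comm q x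
  omega

include h0 hcq in
lemma hh_ident {x : ℕ} (hx : x ≤ p) : q * x + mm p q Δ x + p * hh p q Δ x = p * q := by
  have hle := mm_le h0 hcq hx
  have hd : p ∣ p * q - (q * x + mm p q Δ x) := by
    have h1 : p ∣ mm p q Δ x + q * x := (mm_spec h0 hcq hx).2
    have h2 : p ∣ p * q := Dvd.intro q rfl
    have h3 := Nat.dvd_sub h2 h1
    have he : p * q - (mm p q Δ x + q * x) = p * q - (q * x + mm p q Δ x) := by omega
    rwa [he] at h3
  have h4 : p * hh p q Δ x = p * q - (q * x + mm p q Δ x) := by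
    unfold hh; exact Nat.mul_div_cancel' hd
  omega

lemma mm_min {x n : ℕ} (hn : n ∈ Δ) (hd : p ∣ n + q * x) : mm p q Δ x ≤ n :=
  Nat.sInf_le ⟨hn, hd⟩

variable (hpq : Nat.Coprime p q)

include h0 hcp hcq hpq in
lemma memD_iff {x y : ℕ} (hx1 : 1 ≤ x) (hxp : x ≤ p) (hy1 : 1 ≤ y) :
    (x, y) ∈ diagD p q Δ ↔ y ≤ hh p q Δ x := by
  have hp : 0 < p := by omega
  have hid := hh_ident h0 hcq hxp
  constructor
  · rintro ⟨hR, hmem⟩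
    have hlt : q * x + p * y < p * q := hR.2.2
    have hmem' : p * q - (q * x + p * y) ∈ Δ := hmem
    have hd : p ∣ (p * q - (q * x + p * y)) + q * x := by
      have he : (p * q - (q * x + p * y)) + q * x = p * q - p * y := by omega
      rw [he]
      exact Nat.dvd_sub (Dvd.intro q rfl) (Dvd.intro y rfl)
    have hmin := mm_min hmem' hd
    have hy : p * y ≤ p * hh p q Δ x := by omega
    exact Nat.le_of_mul_le_mul_left hy hp
  · intro hy
    have hpy : p * y ≤ p * hh p q Δ x := Nat.mul_le_mul_left p hy
    have hle : q * x + p * y + mm p q Δ x ≤ p * q := by omega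
    have hlt : q * x + p * y < p * q := by
      rcases Nat.lt_or_ge (q * x + p * y) (p * q) with h | h
      · exact h
      · exfalso
        have hm0 : mm p q Δ x = 0 := by omega
        have hdx : p ∣ x * q := by
          have h5 := (mm_spec h0 hcq hxp).2
          rw [hm0] at h5
          simpa [Nat.mul_comm] using h5
        have hdx2 : p ∣ x := hpq.dvd_of_dvd_mul_right hdx
        have hxep : x = p := le_antisymm hxp (Nat.le_of_dvd (by omega) hdx2)
        have h6 : q * x = p * q := by rw [hxep]; ring
        have h7 : 0 < p * y := Nat.mul_pos hp hy1
        omega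
    refine ⟨⟨hx1, hy1, hlt⟩, ?_⟩
    show p * q - (q * x + p * y) ∈ Δ
    have hd2 : p ∣ (p * q - (q * x + p * y)) + q * x := by
      have he : (p * q - (q * x + p * y)) + q * x = p * q - p * y := by omega
      rw [he]; exact Nat.dvd_sub (Dvd.intro q rfl) (Dvd.intro y rfl)
    have hmmem := (mm_spec h0 hcq hxp).1
    have hmd := (mm_spec h0 hcq hxp).2
    refine climb hcp hmmem (by omega) ?_
    have h9 := Nat.dvd_sub hd2 hmd
    have he : (p * q - (q * x + p * y)) + q * x - (mm p q Δ x + q * x)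
        = p * q - (q * x + p * y) - mm p q Δ x := by omega
    rwa [he] at h9

omit hpq in
lemma diagD_swap (x y : ℕ) :
    (x, y) ∈ diagD p q Δ ↔ (y, x) ∈ diagD q p Δ := by
  simp only [diagD, Rplus, boxLabel, Set.mem_setOf_eq]
  constructor
  · rintro ⟨⟨h1, h2, h3⟩, h4⟩
    have e1 : q * p - (p * y + q * x) = p * q - (q * x + p * y) := by
      have : q * p = p * q := Nat.mul_comm q p; omega
    have h5 : p * y + q * x < q * p := by have : q * p = p * q := Nat.mul_comm q p; omega
    exact ⟨⟨h2, h1, h5⟩, by rwa [e1]⟩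
  · rintro ⟨⟨h1, h2, h3⟩, h4⟩
    have e1 : q * p - (p * y + q * x) = p * q - (q * x + p * y) := by
      have : q * p = p * q := Nat.mul_comm q p; omega
    have h5 : q * x + p * y < p * q := by have : q * p = p * q := Nat.mul_comm q p; omega
    exact ⟨⟨h2, h1, h5⟩, by rwa [e1] at h4⟩

include h0 hcp hcq hpq in
lemma memD_iff_row {x y : ℕ} (hy1 : 1 ≤ y) (hyq : y ≤ q) (hx1 : 1 ≤ x) :
    (x, y) ∈ diagD p q Δ ↔ x ≤ hh q p Δ y := by
  rw [diagD_swap]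
  exact memD_iff h0 hcq hcp hpq.symm hy1 hyq hx1

lemma ncard_Icc_one (n : ℕ) : (Set.Icc 1 n).ncard = n := by
  rw [← Finset.coe_Icc, Set.ncard_coe_finset, Nat.card_Icc]; omega

lemma ncard_Ioc (a b : ℕ) : (Set.Ioc a b).ncard = b - a := by
  rw [← Finset.coe_Ioc, Set.ncard_coe_finset, Nat.card_Ioc]

include h0 hcp hcq hpq in
lemma colHeight_eq {x : ℕ} (hx1 : 1 ≤ x) (hxp : x ≤ p) :
    colHeight (diagD p q Δ) x = hh p q Δ x := by
  have hset : {y : ℕ | (x, y) ∈ diagD p q Δ} = Set.Icc 1 (hh p q Δ x) := by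
    ext y
    simp only [Set.mem_setOf_eq, Set.mem_Icc]
    constructor
    · intro hy
      have hy1 : 1 ≤ y := hy.1.2.1
      exact ⟨hy1, (memD_iff h0 hcp hcq hpq hx1 hxp hy1).mp hy⟩
    · rintro ⟨hy1, hy2⟩
      exact (memD_iff h0 hcp hcq hpq hx1 hxp hy1).mpr hy2
  rw [colHeight, hset, ncard_Icc_one]

include h0 hcp hcq hpq in
lemma rowLen_eq {y : ℕ} (hy1 : 1 ≤ y) (hyq : y ≤ q) :
    rowLen (diagD p q Δ) y = hh q p Δ y := by
  have hset : {x : ℕ | (x, y) ∈ diagD p q Δ} = Set.Icc 1 (hh q p Δ y) := by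
    ext x
    simp only [Set.mem_setOf_eq, Set.mem_Icc]
    constructor
    · intro hx
      have hx1 : 1 ≤ x := hx.1.1
      exact ⟨hx1, (memD_iff_row h0 hcp hcq hpq hy1 hyq hx1).mp hx⟩
    · rintro ⟨hx1, hx2⟩
      exact (memD_iff_row h0 hcp hcq hpq hy1 hyq hx1).mpr hx2
  rw [rowLen, hset, ncard_Icc_one]

include h0 hcp hcq hpq in
lemma leg_eq {x y : ℕ} (hx1 : 1 ≤ x) (hxp : x ≤ p) :
    leg (diagD p q Δ) (x, y) = hh p q Δ x - y := by
  have hset : {y' : ℕ | y < y' ∧ (x, y') ∈ diagD p q Δ} = Set.Ioc y (hh p q Δ x) := by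
    ext y'
    simp only [Set.mem_setOf_eq, Set.mem_Ioc]
    constructor
    · rintro ⟨h1, h2⟩
      exact ⟨h1, (memD_iff h0 hcp hcq hpq hx1 hxp (by omega)).mp h2⟩
    · rintro ⟨h1, h2⟩
      exact ⟨h1, (memD_iff h0 hcp hcq hpq hx1 hxp (by omega)).mpr h2⟩
  show {y' : ℕ | y < y' ∧ (x, y') ∈ diagD p q Δ}.ncard = hh p q Δ x - y
  rw [hset, ncard_Ioc]

include h0 hcp hcq hpq in
lemma arm_eq {x y : ℕ} (hy1 : 1 ≤ y) (hyq : y ≤ q) :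
    arm (diagD p q Δ) (x, y) = hh q p Δ y - x := by
  have hset : {x' : ℕ | x < x' ∧ (x', y) ∈ diagD p q Δ} = Set.Ioc x (hh q p Δ y) := by
    ext x'
    simp only [Set.mem_setOf_eq, Set.mem_Ioc]
    constructor
    · rintro ⟨h1, h2⟩
      exact ⟨h1, (memD_iff_row h0 hcp hcq hpq hy1 hyq (by omega)).mp h2⟩
    · rintro ⟨h1, h2⟩
      exact ⟨h1, (memD_iff_row h0 hcp hcq hpq hy1 hyq (by omega)).mpr h2⟩
  show {x' : ℕ | x < x' ∧ (x', y) ∈ diagD p q Δ}.ncard = hh q p Δ y - x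
  rw [hset, ncard_Ioc]

lemma exists_rep (p' q' : ℕ) (hp : 0 < p') (hpq' : Nat.Coprime p' q') (a : ℕ) :
    ∃ x, 1 ≤ x ∧ x ≤ p' ∧ p' ∣ a + q' * x := by
  haveI : NeZero p' := ⟨hp.ne'⟩
  set u : ZMod p' := -(a : ZMod p') * (q' : ZMod p')⁻¹ with hu
  have hinv : (q' : ZMod p') * (q' : ZMod p')⁻¹ = 1 := ZMod.coe_mul_inv_eq_one q' hpq'.symm
  by_cases h0 : u.val = 0
  · refine ⟨p', hp, le_refl p', ?_⟩
    have hu0 : u = 0 := (ZMod.val_eq_zero u).mp h0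
    have ha0 : (a : ZMod p') = 0 := by
      have h1 : -(a : ZMod p') * (q' : ZMod p')⁻¹ = 0 := by rw [← hu, hu0]
      have h2 : -(a : ZMod p') * (q' : ZMod p')⁻¹ * (q' : ZMod p') = 0 := by rw [h1, zero_mul]
      linear_combination -h2 - (a : ZMod p') * hinv
    have : ((a + q' * p' : ℕ) : ZMod p') = 0 := by
      push_cast
      rw [ZMod.natCast_self, mul_zero, add_zero]; exact ha0
    exact (ZMod.natCast_eq_zero_iff _ p').mp this
  · refine ⟨u.val, by omega, le_of_lt (ZMod.val_lt u), ?_⟩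
    have hcast : ((u.val : ℕ) : ZMod p') = u := ZMod.natCast_zmod_val u
    have : ((a + q' * u.val : ℕ) : ZMod p') = 0 := by
      push_cast
      rw [hcast, hu]
      linear_combination (-(a : ZMod p')) * hinv
    exact (ZMod.natCast_eq_zero_iff _ p').mp this

include h0 hcp hcq hpq in
lemma pBasis_eq (hp : 0 < p) : pBasis p Δ = mm p q Δ '' Set.Icc 1 p := by
  ext a
  constructor
  · rintro ⟨ha, hni⟩
    obtain ⟨x, hx1, hxp, hdvd⟩ := exists_rep p q hp hpq a
    refine ⟨x, Set.mem_Icc.mpr ⟨hx1, hxp⟩, ?_⟩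
    have hmle : mm p q Δ x ≤ a := mm_min ha hdvd
    rcases Nat.eq_or_lt_of_le hmle with heq | hlt
    · exact heq
    · exfalso
      have hmd := (mm_spec h0 hcq hxp).2
      have hd2 : p ∣ a - mm p q Δ x := by
        have := Nat.dvd_sub hdvd hmd
        have he : a + q * x - (mm p q Δ x + q * x) = a - mm p q Δ x := by omega
        rwa [he] at this
      have hpa : mm p q Δ x + p ≤ a := by
        obtain ⟨k, hk⟩ := hd2
        have hk1 : 1 ≤ k := by
          by_contra hc
          have hk0 : k = 0 := by omega
          subst hk0
          simp at hk
          omega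
        have e1 : p * 1 ≤ p * k := Nat.mul_le_mul_left p hk1
        have e2 : p * 1 = p := Nat.mul_one p
        omega
      have hd3 : p ∣ (a - p) - mm p q Δ x := by
        obtain ⟨k, hk⟩ := hd2
        refine ⟨k - 1, ?_⟩
        have hk1 : 1 ≤ k := by
          by_contra hc
          have hk0 : k = 0 := by omega
          subst hk0
          simp at hk
          omega
        have e1 : p * (k - 1) = p * k - p := by rw [Nat.mul_sub, Nat.mul_one]
        have e2 : p * 1 ≤ p * k := Nat.mul_le_mul_left p hk1
        have e3 : p * 1 = p := Nat.mul_one p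
        omega
      have hmem2 : a - p ∈ Δ := climb hcp (mm_spec h0 hcq hxp).1 (by omega) hd3
      exact hni ⟨a - p, hmem2, by simp; omega⟩
  · rintro ⟨x, hx, rfl⟩
    rw [Set.mem_Icc] at hx
    refine ⟨(mm_spec h0 hcq hx.2).1, ?_⟩
    rintro ⟨d, hd, hdp⟩
    simp only at hdp
    have hdd : p ∣ d + q * x := by
      have := (mm_spec h0 hcq hx.2).2
      rw [← hdp] at this
      have h2 : p ∣ (d + p + q * x) - p := Nat.dvd_sub this dvd_rfl
      have he : (d + p + q * x) - p = d + q * x := by omega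
      rwa [he] at h2
    have := mm_min hd hdd
    omega

include h0 hcp hcq hpq in
lemma qCogen_eq (hq : 0 < q) :
    qCogen q Δ = (fun y => (mm q p Δ y : ℤ) - q) '' Set.Icc 1 q := by
  ext b
  constructor
  · rintro ⟨hnot, n, hn, hcast⟩
    obtain ⟨y, hy1, hyq, hdvd⟩ := exists_rep q p hq hpq.symm n
    refine ⟨y, Set.mem_Icc.mpr ⟨hy1, hyq⟩, ?_⟩
    have hmle : mm q p Δ y ≤ n := mm_min hn hdvd
    rcases Nat.eq_or_lt_of_le hmle with heq | hlt
    · show (mm q p Δ y : ℤ) - (q : ℤ) = b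
      rw [heq]
      omega
    · exfalso
      have hmd := (mm_spec h0 hcp hyq).2
      have hd2 : q ∣ n - mm q p Δ y := by
        have := Nat.dvd_sub hdvd hmd
        have he : n + p * y - (mm q p Δ y + p * y) = n - mm q p Δ y := by omega
        rwa [he] at this
      have hqa : mm q p Δ y + q ≤ n := by
        obtain ⟨k, hk⟩ := hd2
        have hk1 : 1 ≤ k := by
          by_contra hc
          have hk0 : k = 0 := by omega
          subst hk0
          simp at hk
          omega
        have e1 : q * 1 ≤ q * k := Nat.mul_le_mul_left q hk1
        have e2 : q * 1 = q := Nat.mul_one q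
        omega
      have hd3 : q ∣ (n - q) - mm q p Δ y := by
        obtain ⟨k, hk⟩ := hd2
        refine ⟨k - 1, ?_⟩
        have hk1 : 1 ≤ k := by
          by_contra hc
          have hk0 : k = 0 := by omega
          subst hk0
          simp at hk
          omega
        have e1 : q * (k - 1) = q * k - q := by rw [Nat.mul_sub, Nat.mul_one]
        have e2 : q * 1 ≤ q * k := Nat.mul_le_mul_left q hk1
        have e3 : q * 1 = q := Nat.mul_one q
        omega
      have hmem2 : n - q ∈ Δ := climb hcq (mm_spec h0 hcp hyq).1 (by omega) hd3
      apply hnot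
      refine ⟨n - q, hmem2, ?_⟩
      have : (q : ℤ) ≤ n := by omega
      push_cast [Nat.cast_sub (by omega : q ≤ n)]
      omega
  · rintro ⟨y, hy, hb⟩
    have hb' : (mm q p Δ y : ℤ) - (q : ℤ) = b := hb
    rw [Set.mem_Icc] at hy
    have hmmem := (mm_spec h0 hcp hy.2).1
    have hmd := (mm_spec h0 hcp hy.2).2
    constructor
    · rintro ⟨n, hn, hcast⟩
      have hn' : n + q = mm q p Δ y := by omega
      have hdd : q ∣ n + p * y := by
        have h2 : q ∣ (mm q p Δ y + p * y) - q := Nat.dvd_sub hmd dvd_rfl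
        have he : (mm q p Δ y + p * y) - q = n + p * y := by omega
        rwa [he] at h2
      have := mm_min hn hdd
      omega
    · refine ⟨mm q p Δ y, hmmem, by omega⟩

include h0 hcq hpq in
lemma mm_injOn : Set.InjOn (mm p q Δ) (Set.Icc 1 p) := by
  have key : ∀ x x', x ∈ Set.Icc 1 p → x' ∈ Set.Icc 1 p → x ≤ x' →
      mm p q Δ x = mm p q Δ x' → x = x' := by
    intro x x' hx hx' hle heq
    rw [Set.mem_Icc] at hx hx'
    have hd1 := (mm_spec h0 hcq hx.2).2
    have hd2 := (mm_spec h0 hcq hx'.2).2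
    rw [heq] at hd1
    have hd3 : p ∣ q * x' - q * x := by
      have := Nat.dvd_sub hd2 hd1
      have he : mm p q Δ x' + q * x' - (mm p q Δ x' + q * x) = q * x' - q * x := by omega
      rwa [he] at this
    have he2 : q * x' - q * x = (x' - x) * q := by
      rw [Nat.sub_mul]
      have e1 : x' * q = q * x' := Nat.mul_comm x' q
      have e2 : x * q = q * x := Nat.mul_comm x q
      omega
    rw [he2] at hd3
    have hd4 : p ∣ x' - x := hpq.dvd_of_dvd_mul_right hd3
    have : x' - x = 0 := by
      by_contra hne
      have := Nat.le_of_dvd (by omega) hd4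
      omega
    omega
  intro x hx x' hx' heq
  rcases le_total x x' with h | h
  · exact key x x' hx hx' h heq
  · exact (key x' x hx' hx h heq.symm).symm

end Stmt14

open Stmt14

/-- the number of pairs `(a, b)` with `a` a `p`-generator, `b` a
`q`-cogenerator and `a < b` equals
`|{c ∈ R \ D : a(c)q > (l(c)+1)p}| + |{c ∈ D : (a(c)+1)q < l(c)p}|` for `D = D(Δ)`. -/
theorem stmt_14 (p q : ℕ) (hp : 0 < p) (hq : 0 < q) (hpq : Nat.Coprime p q)
    (Δ : Set ℕ) (hΔ : IsSemiModule p q Δ) :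
    {ab : ℕ × ℤ | ab.1 ∈ pBasis p Δ ∧ ab.2 ∈ qCogen q Δ ∧ (ab.1 : ℤ) < ab.2}.ncard =
      {c | c ∈ Rbox p q ∧ c ∉ diagD p q Δ ∧
        armOut (diagD p q Δ) c * q > (legOut (diagD p q Δ) c + 1) * p}.ncard +
      {c | c ∈ diagD p q Δ ∧
        (arm (diagD p q Δ) c + 1) * q < leg (diagD p q Δ) c * p}.ncard := by
  obtain ⟨h0, hclose⟩ := hΔ
  have hcp : ∀ n ∈ Δ, n + p ∈ Δ := fun n hn => hclose n hn p ⟨1, 0, by ring⟩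
  have hcq : ∀ n ∈ Δ, n + q ∈ Δ := fun n hn => hclose n hn q ⟨0, 1, by ring⟩
  set D := diagD p q Δ with hD
  set S : Set (ℕ × ℕ) := {c | (1 ≤ c.1 ∧ c.1 ≤ p ∧ 1 ≤ c.2 ∧ c.2 ≤ q) ∧
      q * hh q p Δ c.2 + q + p * c.2 < q * c.1 + p * hh p q Δ c.1} with hSdef
  have hSfin : S.Finite := by
    apply Set.Finite.subset ((Set.finite_Icc 1 p).prod (Set.finite_Icc 1 q))
    rintro ⟨x, y⟩ ⟨⟨h1, h2, h3, h4⟩, -⟩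
    exact ⟨Set.mem_Icc.mpr ⟨h1, h2⟩, Set.mem_Icc.mpr ⟨h3, h4⟩⟩
  -- LHS as an image of S
  have hL : {ab : ℕ × ℤ | ab.1 ∈ pBasis p Δ ∧ ab.2 ∈ qCogen q Δ ∧ (ab.1 : ℤ) < ab.2}
      = (fun c : ℕ × ℕ => (mm p q Δ c.1, (mm q p Δ c.2 : ℤ) - q)) '' S := by
    ext ⟨a, b⟩
    simp only [Set.mem_setOf_eq, Set.mem_image]
    constructor
    · rintro ⟨ha, hb, hab⟩
      rw [pBasis_eq h0 hcp hcq hpq hp] at ha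
      rw [qCogen_eq h0 hcp hcq hpq hq] at hb
      obtain ⟨x, hx, rfl⟩ := ha
      obtain ⟨y, hy, hby⟩ := hb
      have hby' : (mm q p Δ y : ℤ) - q = b := hby
      rw [Set.mem_Icc] at hx hy
      have hid1 := hh_ident h0 hcq hx.2
      have hid2 := hh_ident h0 hcp hy.2
      have e : q * p = p * q := Nat.mul_comm q p
      have hab' : (mm p q Δ x : ℤ) < (mm q p Δ y : ℤ) - q := by omega
      have h2 : mm p q Δ x + q < mm q p Δ y := by omega
      refine ⟨(x, y), ⟨⟨hx.1, hx.2, hy.1, hy.2⟩,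
        show q * hh q p Δ y + q + p * y < q * x + p * hh p q Δ x by omega⟩, ?_⟩
      show (mm p q Δ x, (mm q p Δ y : ℤ) - q) = (mm p q Δ x, b)
      rw [hby']
    · rintro ⟨⟨x, y⟩, ⟨⟨h1, h2, h3, h4⟩, hcond⟩, heq⟩
      have h2' : x ≤ p := h2
      have h4' : y ≤ q := h4
      have heq' : (mm p q Δ x, (mm q p Δ y : ℤ) - q) = (a, b) := heq
      injection heq' with e1 e2
      subst e1; subst e2
      have hid1 := hh_ident h0 hcq h2'
      have hid2 := hh_ident h0 hcp h4'
      have e : q * p = p * q := Nat.mul_comm q p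
      have hcond' : q * hh q p Δ y + q + p * y < q * x + p * hh p q Δ x := hcond
      refine ⟨?_, ?_, ?_⟩
      · rw [pBasis_eq h0 hcp hcq hpq hp]
        exact ⟨x, Set.mem_Icc.mpr ⟨h1, h2⟩, rfl⟩
      · rw [qCogen_eq h0 hcp hcq hpq hq]
        exact ⟨y, Set.mem_Icc.mpr ⟨h3, h4⟩, rfl⟩
      · show (mm p q Δ x : ℤ) < (mm q p Δ y : ℤ) - q
        omega
  -- first RHS set
  have hR1 : {c | c ∈ Rbox p q ∧ c ∉ D ∧
        armOut D c * q > (legOut D c + 1) * p} = S \ D := by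
    ext ⟨x, y⟩
    constructor
    · rintro ⟨hbox, hnd, hcond⟩
      obtain ⟨h1, h2, h3, h4⟩ : 1 ≤ x ∧ x ≤ p ∧ 1 ≤ y ∧ y ≤ q := hbox
      have hcond' : (x - 1 - rowLen D y) * q > ((y - 1 - colHeight D x) + 1) * p := hcond
      rw [rowLen_eq h0 hcp hcq hpq h3 h4, colHeight_eq h0 hcp hcq hpq h1 h2] at hcond'
      have hxr : ¬ x ≤ hh q p Δ y := fun hc => hnd ((memD_iff_row h0 hcp hcq hpq h3 h4 h1).mpr hc)
      have hyh : ¬ y ≤ hh p q Δ x := fun hc => hnd ((memD_iff h0 hcp hcq hpq h1 h2 h3).mpr hc)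
      refine ⟨⟨⟨h1, h2, h3, h4⟩, ?_⟩, hnd⟩
      obtain ⟨A, hA⟩ : ∃ A, x = hh q p Δ y + 1 + A := ⟨x - 1 - hh q p Δ y, by omega⟩
      obtain ⟨B, hB⟩ : ∃ B, y = hh p q Δ x + 1 + B := ⟨y - 1 - hh p q Δ x, by omega⟩
      have hA' : x - 1 - hh q p Δ y = A := by omega
      have hB' : y - 1 - hh p q Δ x = B := by omega
      rw [hA', hB'] at hcond'
      have e1 : q * x = q * hh q p Δ y + q + q * A := by rw [hA]; ring
      have e2 : p * y = p * hh p q Δ x + p + p * B := by rw [hB]; ring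
      have e3 : A * q = q * A := Nat.mul_comm A q
      have e4 : (B + 1) * p = p * B + p := by ring
      show q * hh q p Δ y + q + p * y < q * x + p * hh p q Δ x
      omega
    · rintro ⟨hs, hnd⟩
      obtain ⟨⟨h1, h2, h3, h4⟩, hcond⟩ :
          (1 ≤ x ∧ x ≤ p ∧ 1 ≤ y ∧ y ≤ q) ∧
            q * hh q p Δ y + q + p * y < q * x + p * hh p q Δ x := hs
      have hxr : ¬ x ≤ hh q p Δ y := fun hc => hnd ((memD_iff_row h0 hcp hcq hpq h3 h4 h1).mpr hc)
      have hyh : ¬ y ≤ hh p q Δ x := fun hc => hnd ((memD_iff h0 hcp hcq hpq h1 h2 h3).mpr hc)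
      refine ⟨⟨h1, h2, h3, h4⟩, hnd, ?_⟩
      show (x - 1 - rowLen D y) * q > ((y - 1 - colHeight D x) + 1) * p
      rw [rowLen_eq h0 hcp hcq hpq h3 h4, colHeight_eq h0 hcp hcq hpq h1 h2]
      obtain ⟨A, hA⟩ : ∃ A, x = hh q p Δ y + 1 + A := ⟨x - 1 - hh q p Δ y, by omega⟩
      obtain ⟨B, hB⟩ : ∃ B, y = hh p q Δ x + 1 + B := ⟨y - 1 - hh p q Δ x, by omega⟩
      have hA' : x - 1 - hh q p Δ y = A := by omega
      have hB' : y - 1 - hh p q Δ x = B := by omega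
      rw [hA', hB']
      have e1 : q * x = q * hh q p Δ y + q + q * A := by rw [hA]; ring
      have e2 : p * y = p * hh p q Δ x + p + p * B := by rw [hB]; ring
      have e3 : A * q = q * A := Nat.mul_comm A q
      have e4 : (B + 1) * p = p * B + p := by ring
      omega
  -- second RHS set
  have hR2 : {c | c ∈ D ∧ (arm D c + 1) * q < leg D c * p} = S ∩ D := by
    ext ⟨x, y⟩
    have hbounds : (x, y) ∈ D → 1 ≤ x ∧ x ≤ p ∧ 1 ≤ y ∧ y ≤ q := by
      rintro ⟨⟨h1, h3, hlt⟩, -⟩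
      have h1' : 1 ≤ x := h1
      have h3' : 1 ≤ y := h3
      have hlt' : q * x + p * y < p * q := hlt
      have hx2 : x ≤ p := by
        by_contra hc
        have e5 : q * (p + 1) ≤ q * x := Nat.mul_le_mul_left q (by omega)
        have e6 : q * (p + 1) = q * p + q := by ring
        have e7 : q * p = p * q := Nat.mul_comm q p
        have e8 : 0 < p * y := Nat.mul_pos hp h3
        omega
      have hy2 : y ≤ q := by
        by_contra hc
        have e5 : p * (q + 1) ≤ p * y := Nat.mul_le_mul_left p (by omega)
        have e6 : p * (q + 1) = p * q + p := by ring
        have e8 : 0 < q * x := Nat.mul_pos hq h1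
        omega
      exact ⟨h1, hx2, h3, hy2⟩
    constructor
    · rintro ⟨hd, hcond⟩
      obtain ⟨h1, h2, h3, h4⟩ := hbounds hd
      have hxr : x ≤ hh q p Δ y := (memD_iff_row h0 hcp hcq hpq h3 h4 h1).mp hd
      have hyh : y ≤ hh p q Δ x := (memD_iff h0 hcp hcq hpq h1 h2 h3).mp hd
      have hcond' : (arm D (x, y) + 1) * q < leg D (x, y) * p := hcond
      rw [arm_eq h0 hcp hcq hpq h3 h4, leg_eq h0 hcp hcq hpq h1 h2] at hcond'
      refine ⟨⟨⟨h1, h2, h3, h4⟩, ?_⟩, hd⟩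
      obtain ⟨A, hA⟩ : ∃ A, hh q p Δ y = x + A := ⟨hh q p Δ y - x, by omega⟩
      obtain ⟨B, hB⟩ : ∃ B, hh p q Δ x = y + B := ⟨hh p q Δ x - y, by omega⟩
      have hA' : hh q p Δ y - x = A := by omega
      have hB' : hh p q Δ x - y = B := by omega
      rw [hA', hB'] at hcond'
      have e1 : q * hh q p Δ y = q * x + q * A := by rw [hA]; ring
      have e2 : p * hh p q Δ x = p * y + p * B := by rw [hB]; ring
      have e3 : (A + 1) * q = q * A + q := by ring
      have e4 : B * p = p * B := Nat.mul_comm B p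
      show q * hh q p Δ y + q + p * y < q * x + p * hh p q Δ x
      omega
    · rintro ⟨hs, hd⟩
      obtain ⟨h1, h2, h3, h4⟩ := hbounds hd
      obtain ⟨-, hcond⟩ :
          (1 ≤ x ∧ x ≤ p ∧ 1 ≤ y ∧ y ≤ q) ∧
            q * hh q p Δ y + q + p * y < q * x + p * hh p q Δ x := hs
      have hxr : x ≤ hh q p Δ y := (memD_iff_row h0 hcp hcq hpq h3 h4 h1).mp hd
      have hyh : y ≤ hh p q Δ x := (memD_iff h0 hcp hcq hpq h1 h2 h3).mp hd
      refine ⟨hd, ?_⟩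
      show (arm D (x, y) + 1) * q < leg D (x, y) * p
      rw [arm_eq h0 hcp hcq hpq h3 h4, leg_eq h0 hcp hcq hpq h1 h2]
      obtain ⟨A, hA⟩ : ∃ A, hh q p Δ y = x + A := ⟨hh q p Δ y - x, by omega⟩
      obtain ⟨B, hB⟩ : ∃ B, hh p q Δ x = y + B := ⟨hh p q Δ x - y, by omega⟩
      have hA' : hh q p Δ y - x = A := by omega
      have hB' : hh p q Δ x - y = B := by omega
      rw [hA', hB']
      have e1 : q * hh q p Δ y = q * x + q * A := by rw [hA]; ring
      have e2 : p * hh p q Δ x = p * y + p * B := by rw [hB]; ring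
      have e3 : (A + 1) * q = q * A + q := by ring
      have e4 : B * p = p * B := Nat.mul_comm B p
      omega
  -- injectivity
  have hinj : Set.InjOn (fun c : ℕ × ℕ => (mm p q Δ c.1, (mm q p Δ c.2 : ℤ) - q)) S := by
    rintro ⟨x, y⟩ hc ⟨x', y'⟩ hc' heq
    obtain ⟨⟨h1, h2, h3, h4⟩, -⟩ :
        (1 ≤ x ∧ x ≤ p ∧ 1 ≤ y ∧ y ≤ q) ∧
          q * hh q p Δ y + q + p * y < q * x + p * hh p q Δ x := hc
    obtain ⟨⟨h1', h2', h3', h4'⟩, -⟩ :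
        (1 ≤ x' ∧ x' ≤ p ∧ 1 ≤ y' ∧ y' ≤ q) ∧
          q * hh q p Δ y' + q + p * y' < q * x' + p * hh p q Δ x' := hc'
    have heq' : (mm p q Δ x, (mm q p Δ y : ℤ) - q)
        = (mm p q Δ x', (mm q p Δ y' : ℤ) - q) := heq
    injection heq' with e1 e2
    have e2' : mm q p Δ y = mm q p Δ y' := by omega
    have hx : x = x' := mm_injOn h0 hcq hpq
      (Set.mem_Icc.mpr ⟨h1, h2⟩) (Set.mem_Icc.mpr ⟨h1', h2'⟩) e1
    have hy : y = y' := mm_injOn h0 hcp hpq.symm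
      (Set.mem_Icc.mpr ⟨h3, h4⟩) (Set.mem_Icc.mpr ⟨h3', h4'⟩) e2'
    rw [hx, hy]
  rw [hL, Set.ncard_image_of_injOn hinj, hR1, hR2,
    ← Set.ncard_inter_add_ncard_diff_eq_ncard S D hSfin, Nat.add_comm]
end

section
/- Let n ≥ 1 and let Δ be a 0-normalized Γ^{n,n+1}-semi-module with n-basis 0 = a_0 < a_1 < … < a_{n-1}. Then for every j with 0 ≤ j ≤ n−1, the number of indices i ∈ {0, …, n−1} with a_i < a_j + n equals n − g(a_j). -/
section Aux

variable {n : ℕ} {Δ : Set ℕ}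

lemma aux_add_n_mem (hΔ : IsSemiModule n (n + 1) Δ) {x : ℕ} (hx : x ∈ Δ) : x + n ∈ Δ :=
  hΔ.2 x hx n ⟨1, 0, by ring⟩

lemma aux_add_mul_mem (hΔ : IsSemiModule n (n + 1) Δ) {x : ℕ} (hx : x ∈ Δ) (k : ℕ) :
    x + k * n ∈ Δ := by
  induction k with
  | zero => simpa using hx
  | succ m ih =>
    have := aux_add_n_mem hΔ ih
    have h : x + (m + 1) * n = x + m * n + n := by ring
    rwa [h]

/-- Descent: every element of `Δ` lies above a basis element in the same residue class. -/
lemma aux_descent (hn : 1 ≤ n) (hΔ : IsSemiModule n (n + 1) Δ) :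
    ∀ x ∈ Δ, ∃ y ∈ pBasis n Δ, y ≤ x ∧ y % n = x % n := by
  intro x
  induction x using Nat.strong_induction_on with
  | _ x ih =>
    intro hx
    by_cases hb : x ∈ pBasis n Δ
    · exact ⟨x, hb, le_refl x, rfl⟩
    · have hx' : x ∈ (· + n) '' Δ := by
        by_contra h
        exact hb ⟨hx, h⟩
      obtain ⟨y, hy, hxy⟩ := hx'
      have hxy' : y + n = x := hxy
      subst hxy'
      obtain ⟨z, hz, hle, hmod⟩ := ih y (by omega) hy
      exact ⟨z, hz, by omega, by rw [Nat.add_mod_right]; exact hmod⟩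

end Aux

/-- for the `n`-basis `0 = a_0 < … < a_{n-1}` of a `Γ^{n,n+1}`-semi-module,
the number of indices `i` with `a_i < a_j + n` equals `n - g(a_j)`. -/
theorem stmt_16 (n : ℕ) (hn : 1 ≤ n) (Δ : Set ℕ) (hΔ : IsSemiModule n (n + 1) Δ)
    (a : Fin n → ℕ) (ha : StrictMono a) (hrange : Set.range a = pBasis n Δ)
    (j : Fin n) :
    {i : Fin n | a i < a j + n}.ncard = n - gInt (n + 1) Δ (a j) := by
  have hbasis : ∀ i : Fin n, a i ∈ pBasis n Δ := by
    intro i; rw [← hrange]; exact ⟨i, rfl⟩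
  have hmem : ∀ i : Fin n, a i ∈ Δ := fun i => (hbasis i).1
  -- residues of basis elements are pairwise distinct
  have hres_inj : ∀ i i' : Fin n, a i % n = a i' % n → i = i' := by
    have key : ∀ i i' : Fin n, a i < a i' → a i % n = a i' % n → False := by
      intro i i' hlt hmod
      have hdvd : n ∣ a i' - a i := (Nat.modEq_iff_dvd' hlt.le).1 hmod
      obtain ⟨k, hk⟩ := hdvd
      have hk0 : k ≠ 0 := by rintro rfl; simp at hk; omega
      obtain ⟨m, rfl⟩ : ∃ m, k = m + 1 := ⟨k - 1, by omega⟩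
      have hmn : n * (m + 1) = m * n + n := by ring
      have hin : a i + m * n ∈ Δ := aux_add_mul_mem hΔ (hmem i) m
      have himg : a i' ∈ (· + n) '' Δ := by
        refine ⟨a i + m * n, hin, ?_⟩
        show a i + m * n + n = a i'
        omega
      exact (hbasis i').2 himg
    intro i i' hmod
    rcases lt_trichotomy i i' with h | h | h
    · exact absurd hmod (fun hm => key i i' (ha h) hm)
    · exact h
    · exact absurd hmod (fun hm => key i' i (ha h) hm.symm)
  -- membership criterion
  have hchar : ∀ (i : Fin n) (t : ℕ), a i % n = t % n → (t ∈ Δ ↔ a i ≤ t) := by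
    intro i t hmod
    constructor
    · intro ht
      obtain ⟨y, hy, hle, hymod⟩ := aux_descent hn hΔ t ht
      rw [← hrange] at hy
      obtain ⟨i', rfl⟩ := hy
      have : i = i' := hres_inj i i' (by omega)
      rw [this]; exact hle
    · intro hle
      have hdvd : n ∣ t - a i := (Nat.modEq_iff_dvd' hle).1 hmod
      obtain ⟨k, hk⟩ := hdvd
      have hmn : n * k = k * n := Nat.mul_comm _ _
      have : t = a i + k * n := by omega
      rw [this]
      exact aux_add_mul_mem hΔ (hmem i) k
  -- the representative map
  set e : Fin n → ℕ := fun i => a j + ((a i % n + (n - a j % n)) % n) with he_def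
  have he_mod : ∀ i, e i % n = a i % n := by
    intro i
    have h1 : a j % n < n := Nat.mod_lt _ (by omega)
    have : e i ≡ a i [MOD n] := by
      calc e i = a j + ((a i % n + (n - a j % n)) % n) := rfl
        _ ≡ a j + (a i % n + (n - a j % n)) [MOD n] :=
            Nat.ModEq.add_left _ (Nat.mod_modEq _ _)
        _ = (a j + (n - a j % n)) + a i % n := by ring
        _ ≡ (a j % n + (n - a j % n)) + a i % n [MOD n] :=
            Nat.ModEq.add_right _ (Nat.ModEq.add_right _ (Nat.mod_modEq _ _).symm)
        _ = n + a i % n := by omega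
        _ ≡ 0 + a i % n [MOD n] := Nat.ModEq.add_right _ (Nat.modEq_zero_iff_dvd.2 dvd_rfl)
        _ = a i % n := by ring
        _ ≡ a i [MOD n] := Nat.mod_modEq _ _
    exact this
  have he_ge : ∀ i, a j ≤ e i := fun i => Nat.le_add_right _ _
  have he_lt : ∀ i, e i < a j + n := by
    intro i
    have h : (a i % n + (n - a j % n)) % n < n := Nat.mod_lt _ (by omega)
    simp only [he_def]
    omega
  -- e i ∈ Δ ↔ a i < a j + n
  have he_mem : ∀ i, (e i ∈ Δ ↔ a i < a j + n) := by
    intro i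
    rw [hchar i (e i) (he_mod i).symm]
    constructor
    · intro h
      exact lt_of_le_of_lt h (he_lt i)
    · intro h
      by_contra hle
      push_neg at hle
      have hmm : e i ≡ a i [MOD n] := he_mod i
      have hdvd : n ∣ a i - e i := (Nat.modEq_iff_dvd' hle.le).1 hmm
      obtain ⟨k, hk⟩ := hdvd
      have hk0 : k ≠ 0 := by rintro rfl; simp at hk; omega
      have hnk : n ≤ n * k := Nat.le_mul_of_pos_right _ (by omega)
      have hge := he_ge i
      have hlt := he_lt i
      omega
  -- the key set identity
  set S : Set (Fin n) := {i : Fin n | a i < a j + n} with hS_def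
  have hSfin : S.Finite := Set.toFinite _
  have hkey : Set.Ico (a j) (a j + (n + 1)) ∩ Δ = insert (a j + n) (e '' S) := by
    ext t
    constructor
    · rintro ⟨hIco, htΔ⟩
      simp only [Set.mem_Ico] at hIco
      by_cases hEq : t = a j + n
      · subst hEq; exact Set.mem_insert _ _
      · right
        obtain ⟨y, hy, hle, hymod⟩ := aux_descent hn hΔ t htΔ
        rw [← hrange] at hy
        obtain ⟨i, rfl⟩ := hy
        refine ⟨i, ?_, ?_⟩
        · show a i < a j + n
          omega
        · -- e i = t : both in [a j, a j + n), same residue mod n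
          have ht_lt : t < a j + n := by omega
          have h1 : a j ≤ e i := he_ge i
          have h2 : e i < a j + n := he_lt i
          have hmm : e i % n = t % n := by rw [he_mod i]; exact hymod
          rcases le_or_gt (e i) t with h | h
          · have hdvd : n ∣ t - e i := (Nat.modEq_iff_dvd' h).1 hmm
            have hlt' : t - e i < n := by omega
            have h0 : t - e i = 0 := Nat.eq_zero_of_dvd_of_lt hdvd hlt'
            omega
          · have hdvd : n ∣ e i - t := (Nat.modEq_iff_dvd' h.le).1 hmm.symm
            have hlt' : e i - t < n := by omega
            have h0 : e i - t = 0 := Nat.eq_zero_of_dvd_of_lt hdvd hlt'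
            omega
    · intro ht
      rcases ht with rfl | ⟨i, hi, rfl⟩
      · exact ⟨by simp only [Set.mem_Ico]; omega, aux_add_n_mem hΔ (hmem j)⟩
      · have h1 := he_ge i
        have h2 := he_lt i
        exact ⟨by simp only [Set.mem_Ico]; omega, (he_mem i).2 hi⟩
  -- e is injective
  have he_inj : Function.Injective e := by
    intro i i' h
    apply hres_inj
    rw [← he_mod i, ← he_mod i', h]
  -- cardinality computations
  have hcard_img : (e '' S).ncard = S.ncard :=
    Set.ncard_image_of_injective _ he_inj
  have hnotmem : a j + n ∉ e '' S := by
    rintro ⟨i, _, hei⟩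
    have := he_lt i
    omega
  have hcard_ins : (insert (a j + n) (e '' S)).ncard = S.ncard + 1 := by
    rw [Set.ncard_insert_of_notMem hnotmem (hSfin.image e), hcard_img]
  -- total interval
  have hIco_card : (Set.Ico (a j) (a j + (n + 1))).ncard = n + 1 := by
    rw [← Finset.coe_Ico, Set.ncard_coe_finset, Nat.card_Ico]
    omega
  have hsub : Set.Ico (a j) (a j + (n + 1)) ∩ Δ ⊆ Set.Ico (a j) (a j + (n + 1)) :=
    Set.inter_subset_left
  have hdiff_eq : Set.Ico (a j) (a j + (n + 1)) \ Δ
      = Set.Ico (a j) (a j + (n + 1)) \ (Set.Ico (a j) (a j + (n + 1)) ∩ Δ) := by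
    ext t; simp only [Set.mem_diff, Set.mem_inter_iff]; tauto
  have hIcofin : (Set.Ico (a j) (a j + (n + 1))).Finite := Set.finite_Ico _ _
  have hsplit := Set.ncard_diff_add_ncard_of_subset hsub hIcofin
  have hIcap : (Set.Ico (a j) (a j + (n + 1)) ∩ Δ).ncard = S.ncard + 1 := by
    rw [hkey, hcard_ins]
  have hg : gInt (n + 1) Δ (a j) + (S.ncard + 1) = n + 1 := by
    rw [gInt, hdiff_eq]
    omega
  have hSle : S.ncard ≤ n := by
    have h1 : S.ncard ≤ (Set.univ : Set (Fin n)).ncard :=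
      Set.ncard_le_ncard (Set.subset_univ S) (Set.finite_univ)
    have h2 : (Set.univ : Set (Fin n)).ncard = n := by
      rw [Set.ncard_univ]; simp
    omega
  omega
end
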